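/- Let F be a field of characteristic 0, let ι be a type with at least two elements, let V be the finitely supported functions ι →₀ F and W the finitely supported functions (ι ⊕ ℕ) →₀ F, and define ψ : Set V → Set W by ψ(X) = {s ∈ W : the finitely supported function i ↦ s(Sum.inl i) belongs to X}. Then: ψ is injective; ψ(∅) = ∅ and ψ(V) = W; ψ(X ∪ Y) = ψ(X) ∪ ψ(Y) and ψ(Xᶜ) = ψ(X)ᶜ; for all i, j ∈ ι, ψ({s ∈ V : s i = s j}) = {s ∈ W : s(inl i) = s(inl j)}; for every i ∈ ι, ψ(C_i X) = C_{inl i}(ψ X); and the range of ψ is exactly {Y ⊆ W : C_{inr k} Y = Y for every k ∈ ℕ}. (This exhibits the powerset algebra of V as the full neat ι-reduct of the powerset algebra of W.) -/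

import Mathlib

/-- Cylindrification of a set of finitely supported functions in coordinate `i`. -/
def Cyl {κ : Type*} {M : Type*} [Zero M] (i : κ) (Y : Set (κ →₀ M)) : Set (κ →₀ M) :=
  {s | ∃ t ∈ Y, ∀ j, j ≠ i → s j = t j}

/-- The map exhibiting `℘(ι →₀ F)` as the neat `ι`-reduct of `℘((ι ⊕ ℕ) →₀ F)`. -/
def psi (ι F : Type*) [Zero F] : Set (ι →₀ F) → Set ((ι ⊕ ℕ) →₀ F) := fun X =>
  {s | Finsupp.comapDomain Sum.inl s Sum.inl_injective.injOn ∈ X}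

private lemma comap_mapDomain {ι F : Type*} [AddCommMonoid F] (v : ι →₀ F) :
    Finsupp.comapDomain Sum.inl (Finsupp.mapDomain (Sum.inl : ι → ι ⊕ ℕ) v)
      Sum.inl_injective.injOn = v := by
  ext i
  simp [Finsupp.comapDomain_apply, Finsupp.mapDomain_apply Sum.inl_injective]

private lemma mem_iff_of_agree {ι F : Type*} [Zero F] (Y : Set ((ι ⊕ ℕ) →₀ F))
    (hY : ∀ k : ℕ, Cyl (Sum.inr k) Y = Y) :
    ∀ (S : Finset ℕ) (s s' : (ι ⊕ ℕ) →₀ F),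
      (∀ i, s (Sum.inl i) = s' (Sum.inl i)) →
      (∀ k ∉ S, s (Sum.inr k) = s' (Sum.inr k)) → (s ∈ Y ↔ s' ∈ Y) := by
  classical
  intro S
  induction S using Finset.induction_on with
  | empty =>
    intro s s' h1 h2
    have : s = s' := by
      ext j
      rcases j with i | k
      · exact h1 i
      · exact h2 k (by simp)
    rw [this]
  | insert k S' hk IH =>
    intro s s' h1 h2
    set s'' := s.update (Sum.inr k) (s' (Sum.inr k)) with hs''
    have hupd : ∀ j, s'' j = Function.update (⇑s) (Sum.inr k) (s' (Sum.inr k)) j := by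
      intro j; rw [hs'', Finsupp.coe_update]
    have hiff1 : s ∈ Y ↔ s'' ∈ Y := by
      constructor
      · intro hs
        rw [← hY k]
        refine ⟨s, hs, fun j hj => ?_⟩
        rw [hupd j, Function.update_of_ne hj]
      · intro hs
        rw [← hY k]
        refine ⟨s'', hs, fun j hj => ?_⟩
        rw [hupd j, Function.update_of_ne hj]
    have hiff2 : s'' ∈ Y ↔ s' ∈ Y := by
      apply IH
      · intro i
        rw [hupd, Function.update_of_ne (by simp), h1]
      · intro m hm
        by_cases hmk : m = k
        · subst hmk
          rw [hupd, Function.update_self]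
        · rw [hupd, Function.update_of_ne (by simp [hmk])]
          exact h2 m (by simp [hm, hmk])
    rw [hiff1, hiff2]

theorem psi_neat_reduct (F : Type) [Field F] [CharZero F] (ι : Type)
    (hι : ∃ a b : ι, a ≠ b) :
    Function.Injective (psi ι F) ∧
    psi ι F ∅ = ∅ ∧
    psi ι F Set.univ = Set.univ ∧
    (∀ X Y : Set (ι →₀ F), psi ι F (X ∪ Y) = psi ι F X ∪ psi ι F Y) ∧
    (∀ X : Set (ι →₀ F), psi ι F Xᶜ = (psi ι F X)ᶜ) ∧
    (∀ i j : ι, psi ι F {s | s i = s j} = {s | s (Sum.inl i) = s (Sum.inl j)}) ∧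
    (∀ (i : ι) (X : Set (ι →₀ F)), psi ι F (Cyl i X) = Cyl (Sum.inl i) (psi ι F X)) ∧
    Set.range (psi ι F) = {Y : Set ((ι ⊕ ℕ) →₀ F) | ∀ k : ℕ, Cyl (Sum.inr k) Y = Y} := by
  classical
  refine ⟨?_, rfl, rfl, fun X Y => rfl, fun X => rfl, fun i j => rfl, ?_, ?_⟩
  · -- injectivity
    intro X Y h
    ext v
    have := Set.ext_iff.mp h (Finsupp.mapDomain Sum.inl v)
    simpa [psi, comap_mapDomain] using this
  · -- cylindrification
    intro i X
    ext s
    constructor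
    · rintro ⟨t, ht, hst⟩
      -- build witness: update s at inl i to make comap equal t
      refine ⟨s.update (Sum.inl i) (t i), ?_, fun j hj => ?_⟩
      · show Finsupp.comapDomain Sum.inl _ _ ∈ X
        have : Finsupp.comapDomain Sum.inl (s.update (Sum.inl i) (t i))
            Sum.inl_injective.injOn = t := by
          ext j
          rw [Finsupp.comapDomain_apply, Finsupp.coe_update]
          by_cases hji : j = i
          · subst hji; rw [Function.update_self]
          · rw [Function.update_of_ne (by simp [hji])]
            exact hst j hji
        rw [this]; exact ht
      · rw [Finsupp.coe_update, Function.update_of_ne hj]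
    · rintro ⟨t, ht, hst⟩
      refine ⟨Finsupp.comapDomain Sum.inl t Sum.inl_injective.injOn, ht, fun j hj => ?_⟩
      rw [Finsupp.comapDomain_apply, Finsupp.comapDomain_apply]
      exact hst (Sum.inl j) (by simp [hj])
  · -- range
    ext Y
    constructor
    · rintro ⟨X, rfl⟩ k
      ext s
      constructor
      · rintro ⟨t, ht, hst⟩
        show Finsupp.comapDomain Sum.inl _ _ ∈ X
        have : Finsupp.comapDomain Sum.inl s Sum.inl_injective.injOn
            = Finsupp.comapDomain Sum.inl t Sum.inl_injective.injOn := by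
          ext j
          rw [Finsupp.comapDomain_apply, Finsupp.comapDomain_apply]
          exact hst (Sum.inl j) (by simp)
        rw [this]; exact ht
      · intro hs
        exact ⟨s, hs, fun j _ => rfl⟩
    · intro hY
      refine ⟨{v | Finsupp.mapDomain (Sum.inl : ι → ι ⊕ ℕ) v ∈ Y}, ?_⟩
      ext s
      show Finsupp.mapDomain Sum.inl
        (Finsupp.comapDomain Sum.inl s Sum.inl_injective.injOn) ∈ Y ↔ s ∈ Y
      set s' := Finsupp.mapDomain (Sum.inl : ι → ι ⊕ ℕ)
        (Finsupp.comapDomain Sum.inl s Sum.inl_injective.injOn) with hs'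
      have hl : ∀ i, s' (Sum.inl i) = s (Sum.inl i) := by
        intro i
        rw [hs', Finsupp.mapDomain_apply Sum.inl_injective, Finsupp.comapDomain_apply]
      have hr : ∀ k : ℕ, s' (Sum.inr k) = 0 := by
        intro k
        rw [hs', Finsupp.mapDomain_notin_range]
        simp
      refine mem_iff_of_agree Y hY
        (s.support.image (fun j => Sum.elim (fun _ => 0) id j)) s' s hl ?_
      intro k hk
      have hks : Sum.inr k ∉ s.support := by
        intro hmem
        exact hk (Finset.mem_image.mpr ⟨Sum.inr k, hmem, rfl⟩)
      rw [hr k, Finsupp.notMem_support_iff.mp hks]
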